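/- Let $G \subset \mathbb{R}^d$ be open and bounded and let $R_0 \equiv 1, R_1,\dots,R_L \in L^\infty(G)$ be linearly independent. Suppose the prior density $\pi \in L^2(G)$ satisfies $\pi \geq c$ a.e.~on $G$ for some constant $c > 0$. Then there exists $\delta = \delta(L, G, \mathbf{R}) > 0$ such that for every target moment vector $\mathbf{m} \in \mathbb{R}^L$ with $\|\mathbf{m} - \mathrm{res}_L\pi\| < \delta$, the $L^2$-norm matching $\varphi_2(\mathbf{m},\pi) = \pi + \sum_{l=0}^L \lambda_l R_l$ (with $\boldsymbol{\lambda} = H_L^{-1}(0, \mathbf{m} - \mathrm{res}_L\pi)$) is nonnegative a.e.~on $G$. -/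

import Mathlib

open MeasureTheory

lemma euclid_coord_le_norm {n : ℕ} (v : EuclideanSpace ℝ (Fin n)) (l : Fin n) :
    |v l| ≤ ‖v‖ := by
  rw [EuclideanSpace.norm_eq]
  have h1 : |v l| = Real.sqrt (v l ^ 2) := by
    rw [Real.sqrt_sq_eq_abs]
  rw [h1]
  apply Real.sqrt_le_sqrt
  simpa using Finset.single_le_sum (f := fun i => v i ^ 2)
    (fun i _ => sq_nonneg _) (Finset.mem_univ l)

/-- Positivity of the `L²`-norm matching: if the prior density `π ≥ c > 0` a.e.\ on
the open bounded set `G`, then there is `δ > 0` such that for every moment vector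
`m` with `‖m - res_L π‖ < δ`, the matched density
`φ₂(m,π) = π + ∑ λ_l R_l`, `λ = H_L⁻¹ (0, m - res_L π)`, is nonnegative a.e. on `G`. -/
theorem l2_matching_positivity
    {d L : ℕ} (G : Set (EuclideanSpace ℝ (Fin d)))
    (hG_open : IsOpen G) (hG_bdd : Bornology.IsBounded G)
    (R : Fin (L + 1) → EuclideanSpace ℝ (Fin d) → ℝ)
    (hR_meas : ∀ l, Measurable (R l))
    (hR_bdd : ∀ l, ∃ C : ℝ, ∀ x ∈ G, |R l x| ≤ C)   -- `R_l ∈ L^∞(G)`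
    (hR0 : ∀ x ∈ G, R 0 x = 1)
    (hR_indep : ∀ a : Fin (L + 1) → ℝ,
      (∀ᵐ x ∂volume.restrict G, ∑ l, a l * R l x = 0) → a = 0)
    (HL : Matrix (Fin (L + 1)) (Fin (L + 1)) ℝ)
    (hHL : ∀ k l, HL k l = ∫ x in G, R k x * R l x)
    (π : EuclideanSpace ℝ (Fin d) → ℝ)
    (hπ_mem : MemLp π 2 (volume.restrict G))
    (c : ℝ) (hc : 0 < c) (hπc : ∀ᵐ x ∂volume.restrict G, c ≤ π x)
    (resπ : EuclideanSpace ℝ (Fin L))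
    (hresπ : ∀ l : Fin L, resπ l = ∫ x in G, R l.succ x * π x) :
    ∃ δ > (0 : ℝ), ∀ m : EuclideanSpace ℝ (Fin L), ‖m - resπ‖ < δ →
      ∀ lam : Fin (L + 1) → ℝ,
        lam = HL⁻¹.mulVec (Fin.cons 0 fun l : Fin L => m l - resπ l) →
        ∀ᵐ x ∂volume.restrict G, 0 ≤ π x + ∑ l, lam l * R l x := by
  choose C hC using hR_bdd
  set A : ℝ := ∑ k : Fin (L+1), ∑ j : Fin (L+1), |HL⁻¹ k j| with hA_def
  set B : ℝ := ∑ l : Fin (L+1), max (C l) 0 with hB_def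
  have hA : 0 ≤ A := Finset.sum_nonneg fun k _ =>
    Finset.sum_nonneg fun j _ => abs_nonneg _
  have hB : 0 ≤ B := Finset.sum_nonneg fun l _ => le_max_right _ _
  refine ⟨c / (A * B + 1), by positivity, ?_⟩
  intro m hm lam hlam
  -- bound on each coordinate of lam
  have hv : ∀ j : Fin (L+1),
      |(Fin.cons 0 (fun l : Fin L => m l - resπ l) : Fin (L+1) → ℝ) j| ≤ ‖m - resπ‖ := by
    intro j
    rcases Fin.eq_zero_or_eq_succ j with rfl | ⟨l, rfl⟩
    · simp
    · simp only [Fin.cons_succ]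
      have : (m - resπ) l = m l - resπ l := by
        simp [PiLp.sub_apply]
      simpa [this] using euclid_coord_le_norm (m - resπ) l
  have hlam_bd : ∀ k, |lam k| ≤ A * ‖m - resπ‖ := by
    intro k
    rw [hlam]
    calc |(HL⁻¹.mulVec (Fin.cons 0 fun l : Fin L => m l - resπ l)) k|
        = |∑ j, HL⁻¹ k j * (Fin.cons 0 (fun l : Fin L => m l - resπ l) : Fin (L+1) → ℝ) j| := by
          simp [Matrix.mulVec, dotProduct]
      _ ≤ ∑ j, |HL⁻¹ k j * (Fin.cons 0 (fun l : Fin L => m l - resπ l) : Fin (L+1) → ℝ) j| :=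
          Finset.abs_sum_le_sum_abs _ _
      _ ≤ ∑ j, |HL⁻¹ k j| * ‖m - resπ‖ := by
          apply Finset.sum_le_sum
          intro j _
          rw [abs_mul]
          exact mul_le_mul_of_nonneg_left (hv j) (abs_nonneg _)
      _ = (∑ j, |HL⁻¹ k j|) * ‖m - resπ‖ := by rw [Finset.sum_mul]
      _ ≤ A * ‖m - resπ‖ := by
          apply mul_le_mul_of_nonneg_right _ (norm_nonneg _)
          exact Finset.single_le_sum (f := fun k => ∑ j, |HL⁻¹ k j|)
            (fun k _ => Finset.sum_nonneg fun j _ => abs_nonneg _) (Finset.mem_univ k)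
  filter_upwards [hπc, ae_restrict_mem hG_open.measurableSet] with x hx hxG
  have hsum : |∑ l, lam l * R l x| ≤ A * ‖m - resπ‖ * B := by
    calc |∑ l, lam l * R l x| ≤ ∑ l, |lam l * R l x| := Finset.abs_sum_le_sum_abs _ _
      _ ≤ ∑ l, (A * ‖m - resπ‖) * max (C l) 0 := by
          apply Finset.sum_le_sum
          intro l _
          rw [abs_mul]
          exact mul_le_mul (hlam_bd l) (le_max_of_le_left (hC l x hxG))
            (abs_nonneg _) (by positivity)
      _ = A * ‖m - resπ‖ * B := by rw [← Finset.mul_sum]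
  clear_value A B
  have hkey : A * ‖m - resπ‖ * B ≤ c := by
    have hd : ‖m - resπ‖ ≤ c / (A * B + 1) := hm.le
    have h1 : A * ‖m - resπ‖ * B ≤ A * (c / (A * B + 1)) * B := by
      nlinarith [mul_nonneg (mul_nonneg hA hB) (sub_nonneg.mpr hd)]
    have h2 : A * (c / (A * B + 1)) * B ≤ c := by
      rw [show A * (c / (A * B + 1)) * B = A * B * c / (A * B + 1) by ring,
        div_le_iff₀ (by positivity)]
      nlinarith [hc.le]
    linarith
  have := neg_abs_le (∑ l, lam l * R l x)
  linarith [hsum, hx]
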